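/- arXiv:1508.03618 — 4 statements merged into one kernel-verified Lean document; each statement's English description precedes it below -/
import Mathlib

section
/- Let n ≥ 1 and let A be a real symmetric m×m matrix (m ≥ 1), partitioned as A = (Ã v; vᵀ α), where Ã is the (m−1)×(m−1) matrix obtained by deleting the last row and column of A, v ∈ ℝ^{m−1}, and α ∈ ℝ. Let Â be the (m+1)×(m+1) real symmetric matrix whose first row is (0, 0, …, 0, 1), whose middle block of rows is (0 | Ã | v), and whose last row is (1, vᵀ, α) (i.e., Â is obtained from A by bordering with a new first row and column that are zero except for entries 1 in positions (1, m+1) and (m+1, 1)). Then the characteristic polynomials satisfy charpoly(Â) = X · charpoly(A) − charpoly(Ã). -/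
open Polynomial Matrix

private lemma charmatrix_submatrix_inj {k l : ℕ} (M : Matrix (Fin l) (Fin l) ℝ)
    (f : Fin k → Fin l) (hf : Function.Injective f) :
    (charmatrix M).submatrix f f = charmatrix (M.submatrix f f) := by
  ext i j
  by_cases h : i = j
  · subst h; simp
  · rw [submatrix_apply, charmatrix_apply_ne _ _ _ (fun he => h (hf he)),
      charmatrix_apply_ne _ _ _ h, submatrix_apply]

/-- Bordering a symmetric matrix `A = (Ã v; vᵀ α)` by a new row/column
that is zero except for `1` in the corner positions gives a matrix `Â` whose
characteristic polynomial satisfies `charpoly Â = X * charpoly A - charpoly Ã`. -/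
theorem charpoly_bordered (m : ℕ) (hm : 1 ≤ m + 1)
    (A : Matrix (Fin (m + 1)) (Fin (m + 1)) ℝ) (hA : A.IsSymm)
    (Atil : Matrix (Fin m) (Fin m) ℝ)
    (hAtil : Atil = A.submatrix Fin.castSucc Fin.castSucc)
    (Ahat : Matrix (Fin 1 ⊕ Fin (m + 1)) (Fin 1 ⊕ Fin (m + 1)) ℝ)
    (hAhat : Ahat = Matrix.fromBlocks 0
      (fun _ j => if j = Fin.last m then (1 : ℝ) else 0)
      (fun i _ => if i = Fin.last m then (1 : ℝ) else 0) A) :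
    Ahat.charpoly = Polynomial.X * A.charpoly - Atil.charpoly := by
  classical
  let e : Fin 1 ⊕ Fin (m + 1) ≃ Fin (m + 2) :=
    { toFun := Sum.elim (fun _ => 0) Fin.succ
      invFun := fun i => Fin.cases (Sum.inl 0) Sum.inr i
      left_inv := by
        rintro (i | k)
        · simp [Fin.eq_zero i]
        · simp
      right_inv := by
        intro i
        induction i using Fin.cases <;> simp }
  set B : Matrix (Fin (m + 2)) (Fin (m + 2)) ℝ := Matrix.reindex e e Ahat with hB
  have hsymm0 : e.symm 0 = Sum.inl 0 := rfl
  have hsymms : ∀ k : Fin (m + 1), e.symm k.succ = Sum.inr k := fun k => by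
    simp [e]
  have hB00 : B 0 0 = 0 := by
    simp [hB, reindex_apply, submatrix_apply, hsymm0, hAhat, fromBlocks_apply₁₁]
    rfl
  have hB0s : ∀ k : Fin (m + 1), B 0 k.succ = if k = Fin.last m then 1 else 0 := by
    intro k
    simp [hB, reindex_apply, submatrix_apply, hsymm0, hsymms, hAhat, fromBlocks_apply₁₂]
    rfl
  have hBs0 : ∀ k : Fin (m + 1), B k.succ 0 = if k = Fin.last m then 1 else 0 := by
    intro k
    simp [hB, reindex_apply, submatrix_apply, hsymm0, hsymms, hAhat, fromBlocks_apply₂₁]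
    rfl
  have hBss : ∀ i j : Fin (m + 1), B i.succ j.succ = A i j := by
    intro i j
    simp [hB, reindex_apply, submatrix_apply, hsymms, hAhat, fromBlocks_apply₂₂]
    rfl
  have h1 : Ahat.charpoly = B.charpoly := (Matrix.charpoly_reindex e Ahat).symm
  rw [h1, Matrix.charpoly, Matrix.det_succ_row_zero, Fin.sum_univ_succ]
  -- first term
  have hchar00 : B.charmatrix 0 0 = X := by
    rw [charmatrix_apply_eq, hB00, map_zero, sub_zero]
  have hBsub : B.submatrix Fin.succ Fin.succ = A := by
    ext i j; exact hBss i j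
  have hminor1 : (B.charmatrix.submatrix Fin.succ (Fin.succAbove 0)).det = A.charpoly := by
    rw [Fin.succAbove_zero, charmatrix_submatrix_inj _ _ (Fin.succ_injective _), hBsub]
    rfl
  -- the inner minor for the second term
  have hg : Function.Injective (fun i : Fin m => (Fin.castSucc i).succ) := by
    intro i j h
    simpa using h
  have hBg : B.submatrix (fun i : Fin m => (Fin.castSucc i).succ)
      (fun i : Fin m => (Fin.castSucc i).succ) = Atil := by
    ext i j
    rw [submatrix_apply, hBss, hAtil, submatrix_apply]
  have hD : ((B.charmatrix.submatrix Fin.succ Fin.castSucc)).det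
      = (-1) ^ m * (-1) * Atil.charpoly := by
    rw [Matrix.det_succ_column_zero, Finset.sum_eq_single (Fin.last m)]
    · rw [submatrix_apply, Fin.castSucc_zero,
        charmatrix_apply_ne _ _ _ (Fin.succ_ne_zero _), hBs0, if_pos rfl, Polynomial.C_1,
        submatrix_submatrix, Fin.succAbove_last]
      have hcomp : (Fin.succ ∘ Fin.castSucc : Fin m → Fin (m + 2))
          = fun i => (Fin.castSucc i).succ := rfl
      have hcomp2 : (Fin.castSucc ∘ Fin.succ : Fin m → Fin (m + 2))
          = fun i => (Fin.castSucc i).succ := by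
        funext i; exact (Fin.succ_castSucc i).symm
      rw [hcomp, hcomp2, charmatrix_submatrix_inj _ _ hg, hBg, Fin.val_last]
      rw [Matrix.charpoly]
    · intro k _ hk
      rw [submatrix_apply, Fin.castSucc_zero,
        charmatrix_apply_ne _ _ _ (Fin.succ_ne_zero _), hBs0, if_neg hk, map_zero]
      ring
    · simp
  have hsum : (∑ i : Fin (m + 1), (-1) ^ (i.succ : ℕ) * B.charmatrix 0 i.succ *
      (B.charmatrix.submatrix Fin.succ i.succ.succAbove).det) = - Atil.charpoly := by
    rw [Finset.sum_eq_single (Fin.last m)]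
    · rw [charmatrix_apply_ne _ _ _ (Fin.succ_ne_zero _).symm, hB0s, if_pos rfl, Polynomial.C_1,
        Fin.succ_last, Fin.succAbove_last, hD, Fin.val_last]
      have hpow : ((-1 : ℝ[X]) ^ (m + 1) * (-1) ^ m) = -1 := by
        rw [← pow_add]
        have h2 : m + 1 + m = 2 * m + 1 := by ring
        rw [h2, Odd.neg_one_pow ⟨m, by ring⟩]
      calc (-1 : ℝ[X]) ^ (m + 1) * -1 * ((-1) ^ m * -1 * Atil.charpoly)
          = ((-1) ^ (m + 1) * (-1) ^ m) * (Atil.charpoly) := by ring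
        _ = - Atil.charpoly := by rw [hpow]; ring
    · intro k _ hk
      rw [charmatrix_apply_ne _ _ _ (Fin.succ_ne_zero _).symm, hB0s, if_neg hk, map_zero]
      ring
    · simp
  rw [hsum, hchar00, hminor1, Fin.val_zero, pow_zero, one_mul]
  ring
end

section
/- Let t, u, v : ℝ² → ℝ be differentiable functions with u(x,y) ≠ 0 and v(x,y) ≠ 0 for all (x,y), satisfying the total differential system: ∂t/∂x = 2(2−t)/v, ∂t/∂y = −2u(t+1); ∂u/∂x = −2u/v, ∂u/∂y = (2/(3u))(t + v⁻³ − 2u³ − 1); ∂v/∂x = (2/3)(v³(t−u³) + 2), ∂v/∂y = 2uv. Define C = (1/3)((t − u³)v² − v⁻¹) and D = (1/3)v(t+1). Then C and D are first integrals in the y-direction: ∂C/∂y = 0 and ∂D/∂y = 0 everywhere. -/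
/-- If `t, u, v` satisfy the total differential system
`∂t/∂x = 2(2-t)/v`, `∂t/∂y = -2u(t+1)`, `∂u/∂x = -2u/v`,
`∂u/∂y = (2/(3u))(t + v⁻³ - 2u³ - 1)`, `∂v/∂x = (2/3)(v³(t-u³)+2)`,
`∂v/∂y = 2uv`, with `u, v` nonvanishing, then
`C = (1/3)((t-u³)v² - v⁻¹)` and `D = (1/3)v(t+1)` are first integrals in the
`y`-direction: `∂C/∂y = 0` and `∂D/∂y = 0`. -/
theorem first_integrals_y_direction
    (t u v : ℝ → ℝ → ℝ)
    (hu : ∀ x y, u x y ≠ 0) (hv : ∀ x y, v x y ≠ 0)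
    (htx : ∀ x y, HasDerivAt (fun x' => t x' y) (2 * (2 - t x y) / v x y) x)
    (hty : ∀ x y, HasDerivAt (fun y' => t x y') (-2 * u x y * (t x y + 1)) y)
    (hux : ∀ x y, HasDerivAt (fun x' => u x' y) (-2 * u x y / v x y) x)
    (huy : ∀ x y, HasDerivAt (fun y' => u x y')
      (2 / (3 * u x y) * (t x y + (v x y) ^ (-3 : ℤ) - 2 * (u x y) ^ 3 - 1)) y)
    (hvx : ∀ x y, HasDerivAt (fun x' => v x' y)
      (2 / 3 * ((v x y) ^ 3 * (t x y - (u x y) ^ 3) + 2)) x)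
    (hvy : ∀ x y, HasDerivAt (fun y' => v x y') (2 * u x y * v x y) y)
    (C D : ℝ → ℝ → ℝ)
    (hC : ∀ x y, C x y = (1 / 3) * ((t x y - (u x y) ^ 3) * (v x y) ^ 2 - (v x y)⁻¹))
    (hD : ∀ x y, D x y = (1 / 3) * (v x y * (t x y + 1))) :
    (∀ x y, HasDerivAt (fun y' => C x y') 0 y) ∧
    (∀ x y, HasDerivAt (fun y' => D x y') 0 y) := by

  constructor
  · intro x y
    have h : HasDerivAt (fun y' => (1 / 3 : ℝ) * ((t x y' - (u x y') ^ 3) * (v x y') ^ 2 - (v x y')⁻¹))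
        ((1/3) * (((-2 * u x y * (t x y + 1)) - 3 * (u x y)^2 * (2 / (3 * u x y) * (t x y + (v x y) ^ (-3 : ℤ) - 2 * (u x y) ^ 3 - 1))) * (v x y)^2
          + (t x y - (u x y)^3) * (2 * v x y * (2 * u x y * v x y))
          - (-(2 * u x y * v x y) / (v x y)^2))) y := by
      have := (((((hty x y).sub (((huy x y).pow 3))).mul ((hvy x y).pow 2)).sub ((hvy x y).inv (hv x y))).const_mul (1/3 : ℝ))
      refine this.congr_deriv ?_
      norm_num
    have he : ((1/3 : ℝ) * (((-2 * u x y * (t x y + 1)) - 3 * (u x y)^2 * (2 / (3 * u x y) * (t x y + (v x y) ^ (-3 : ℤ) - 2 * (u x y) ^ 3 - 1))) * (v x y)^2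
          + (t x y - (u x y)^3) * (2 * v x y * (2 * u x y * v x y))
          - (-(2 * u x y * v x y) / (v x y)^2))) = 0 := by
      have h1 := hu x y
      have h2 := hv x y
      rw [zpow_neg, zpow_ofNat]
      field_simp
      ring
    rw [he] at h
    apply h.congr_of_eventuallyEq
    filter_upwards with y' using (hC x y')
  · intro x y
    have h : HasDerivAt (fun y' => (1 / 3 : ℝ) * (v x y' * (t x y' + 1)))
        ((1/3) * ((2 * u x y * v x y) * (t x y + 1) + v x y * (-2 * u x y * (t x y + 1)))) y := by
      exact (((hvy x y).mul ((hty x y).add_const 1)).const_mul (1/3))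
    have he : ((1/3 : ℝ) * ((2 * u x y * v x y) * (t x y + 1) + v x y * (-2 * u x y * (t x y + 1)))) = 0 := by ring
    rw [he] at h
    apply h.congr_of_eventuallyEq
    filter_upwards with y' using (hD x y')
end

section
/- Let t, u, v : ℝ² → ℝ be differentiable functions with u(x,y) ≠ 0 and v(x,y) ≠ 0 for all (x,y), satisfying: ∂t/∂x = 2(2−t)/v, ∂t/∂y = −2u(t+1); ∂u/∂x = −2u/v, ∂u/∂y = (2/(3u))(t + v⁻³ − 2u³ − 1); ∂v/∂x = (2/3)(v³(t−u³) + 2), ∂v/∂y = 2uv. Define C = (1/3)((t − u³)v² − v⁻¹) and D = (1/3)v(t+1). Then in the x-direction C and D satisfy the ODE system ∂C/∂x = 4(C² + D) and ∂D/∂x = 2(CD + 1) everywhere. -/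
/-- If `t, u, v` satisfy the total differential system
`∂t/∂x = 2(2-t)/v`, `∂t/∂y = -2u(t+1)`, `∂u/∂x = -2u/v`,
`∂u/∂y = (2/(3u))(t + v⁻³ - 2u³ - 1)`, `∂v/∂x = (2/3)(v³(t-u³)+2)`,
`∂v/∂y = 2uv`, with `u, v` nonvanishing, then
`C = (1/3)((t-u³)v² - v⁻¹)` and `D = (1/3)v(t+1)` satisfy the ODE system `∂C/∂x = 4(C²+D)` and `∂D/∂x = 2(CD+1)` in the `x`-direction. -/
theorem first_integrals_x_direction
    (t u v : ℝ → ℝ → ℝ)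
    (hu : ∀ x y, u x y ≠ 0) (hv : ∀ x y, v x y ≠ 0)
    (htx : ∀ x y, HasDerivAt (fun x' => t x' y) (2 * (2 - t x y) / v x y) x)
    (hty : ∀ x y, HasDerivAt (fun y' => t x y') (-2 * u x y * (t x y + 1)) y)
    (hux : ∀ x y, HasDerivAt (fun x' => u x' y) (-2 * u x y / v x y) x)
    (huy : ∀ x y, HasDerivAt (fun y' => u x y')
      (2 / (3 * u x y) * (t x y + (v x y) ^ (-3 : ℤ) - 2 * (u x y) ^ 3 - 1)) y)
    (hvx : ∀ x y, HasDerivAt (fun x' => v x' y)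
      (2 / 3 * ((v x y) ^ 3 * (t x y - (u x y) ^ 3) + 2)) x)
    (hvy : ∀ x y, HasDerivAt (fun y' => v x y') (2 * u x y * v x y) y)
    (C D : ℝ → ℝ → ℝ)
    (hC : ∀ x y, C x y = (1 / 3) * ((t x y - (u x y) ^ 3) * (v x y) ^ 2 - (v x y)⁻¹))
    (hD : ∀ x y, D x y = (1 / 3) * (v x y * (t x y + 1))) :
    (∀ x y, HasDerivAt (fun x' => C x' y) (4 * ((C x y) ^ 2 + D x y)) x) ∧
    (∀ x y, HasDerivAt (fun x' => D x' y) (2 * (C x y * D x y + 1)) x) := by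
  constructor
  · intro x y
    have h1 := (((htx x y).sub ((hux x y).pow 3)).mul ((hvx x y).pow 2)).sub
      ((hvx x y).inv (hv x y))
    have h2 := h1.const_mul (1/3 : ℝ)
    have he : (fun x' => C x' y) = fun x' =>
        (1/3 : ℝ) * ((t x' y - (u x' y) ^ 3) * (v x' y) ^ 2 - (v x' y)⁻¹) :=
      funext fun x' => hC x' y
    rw [he, hC, hD]
    refine h2.congr_deriv ?_
    simp only [Pi.pow_apply, Pi.sub_apply, Pi.mul_apply, Nat.cast_ofNat]
    have hvne := hv x y
    field_simp
    ring
  · intro x y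
    have h1 := ((hvx x y).mul ((htx x y).add_const 1)).const_mul (1/3 : ℝ)
    have he : (fun x' => D x' y) = fun x' =>
        (1/3 : ℝ) * (v x' y * (t x' y + 1)) := funext fun x' => hD x' y
    rw [he, hC, hD]
    refine h1.congr_deriv ?_
    have hvne := hv x y
    field_simp
    ring
end

section
/- Define polynomial functions of (β, μ, κ) ∈ ℝ³: A = μ² + (1/3)(β² − βκ + κ²) + 1 and B = (1/27)(2β³ − 3β²κ − 3βκ² + 2κ³) + (1/3)(μ²(β+κ) + κ − 2β). Define two vector fields on ℝ³ acting on differentiable functions f(β,μ,κ) by V₂f = (βκ + 2μ² + 2)·∂f/∂β + μ(2κ − β)·∂f/∂μ + (κ² − 2μ² + 4)·∂f/∂κ and V₃f = 3βμ·∂f/∂β + (μ² + βκ − β² + 1)·∂f/∂μ + μ(κ − 2β)·∂f/∂κ. Then for all (β, μ, κ) ∈ ℝ³ the identities 3·B·V₂A = 2·A·V₂B and 3·B·V₃A = 2·A·V₃B hold; consequently, wherever B ≠ 0, the function A³/B² is annihilated by both V₂ and V₃: V₂(A³/B²) = 0 and V₃(A³/B²) = 0. -/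
/-- The polynomial function `A(β,μ,κ) = μ² + (β² - βκ + κ²)/3 + 1`. -/
noncomputable def funA (β μ κ : ℝ) : ℝ :=
  μ ^ 2 + (β ^ 2 - β * κ + κ ^ 2) / 3 + 1

/-- The polynomial function
`B(β,μ,κ) = (2β³ - 3β²κ - 3βκ² + 2κ³)/27 + (μ²(β+κ) + κ - 2β)/3`. -/
noncomputable def funB (β μ κ : ℝ) : ℝ :=
  (2 * β ^ 3 - 3 * β ^ 2 * κ - 3 * β * κ ^ 2 + 2 * κ ^ 3) / 27
    + (μ ^ 2 * (β + κ) + κ - 2 * β) / 3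

/-- The first-order differential operator
`V₂ f = (βκ + 2μ² + 2)∂f/∂β + μ(2κ - β)∂f/∂μ + (κ² - 2μ² + 4)∂f/∂κ`. -/
noncomputable def V₂ (f : ℝ → ℝ → ℝ → ℝ) (β μ κ : ℝ) : ℝ :=
  (β * κ + 2 * μ ^ 2 + 2) * deriv (fun b => f b μ κ) β
    + μ * (2 * κ - β) * deriv (fun m => f β m κ) μ
    + (κ ^ 2 - 2 * μ ^ 2 + 4) * deriv (fun c => f β μ c) κ

/-- The first-order differential operator
`V₃ f = 3βμ ∂f/∂β + (μ² + βκ - β² + 1)∂f/∂μ + μ(κ - 2β)∂f/∂κ`. -/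
noncomputable def V₃ (f : ℝ → ℝ → ℝ → ℝ) (β μ κ : ℝ) : ℝ :=
  3 * β * μ * deriv (fun b => f b μ κ) β
    + (μ ^ 2 + β * κ - β ^ 2 + 1) * deriv (fun m => f β m κ) μ
    + μ * (κ - 2 * β) * deriv (fun c => f β μ c) κ

lemma cubic_hasDerivAt (c3 c2 c1 c0 x : ℝ) :
    HasDerivAt (fun t : ℝ => c3 * t ^ 3 + c2 * t ^ 2 + c1 * t + c0)
      (3 * c3 * x ^ 2 + 2 * c2 * x + c1) x := by
  have h := ((((hasDerivAt_pow 3 x).const_mul c3).add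
      ((hasDerivAt_pow 2 x).const_mul c2)).add
      ((hasDerivAt_id x).const_mul c1)).add_const c0
  refine h.congr_deriv ?_
  push_cast; ring

lemma hAb (β μ κ : ℝ) : HasDerivAt (fun b => funA b μ κ) ((2 * β - κ) / 3) β := by
  have e : (fun b => funA b μ κ)
      = fun t => 0 * t ^ 3 + (1/3) * t ^ 2 + (-κ/3) * t + (μ ^ 2 + κ ^ 2 / 3 + 1) := by
    funext t; unfold funA; ring
  rw [e]; convert cubic_hasDerivAt 0 (1/3) (-κ/3) (μ ^ 2 + κ ^ 2 / 3 + 1) β using 1; ring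

lemma hAm (β μ κ : ℝ) : HasDerivAt (fun m => funA β m κ) (2 * μ) μ := by
  have e : (fun m => funA β m κ)
      = fun t => 0 * t ^ 3 + 1 * t ^ 2 + 0 * t + ((β ^ 2 - β * κ + κ ^ 2) / 3 + 1) := by
    funext t; unfold funA; ring
  rw [e]; convert cubic_hasDerivAt 0 1 0 ((β ^ 2 - β * κ + κ ^ 2) / 3 + 1) μ using 1; ring

lemma hAk (β μ κ : ℝ) : HasDerivAt (fun c => funA β μ c) ((2 * κ - β) / 3) κ := by
  have e : (fun c => funA β μ c)
      = fun t => 0 * t ^ 3 + (1/3) * t ^ 2 + (-β/3) * t + (μ ^ 2 + β ^ 2 / 3 + 1) := by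
    funext t; unfold funA; ring
  rw [e]; convert cubic_hasDerivAt 0 (1/3) (-β/3) (μ ^ 2 + β ^ 2 / 3 + 1) κ using 1; ring

lemma hBb (β μ κ : ℝ) : HasDerivAt (fun b => funB b μ κ)
    ((6 * β ^ 2 - 6 * β * κ - 3 * κ ^ 2) / 27 + (μ ^ 2 - 2) / 3) β := by
  have e : (fun b => funB b μ κ)
      = fun t => (2/27) * t ^ 3 + (-κ/9) * t ^ 2 + (-(κ ^ 2)/9 + (μ ^ 2 - 2)/3) * t
          + (2 * κ ^ 3 / 27 + (μ ^ 2 * κ + κ) / 3) := by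
    funext t; unfold funB; ring
  rw [e]
  convert cubic_hasDerivAt (2/27) (-κ/9) (-(κ ^ 2)/9 + (μ ^ 2 - 2)/3)
    (2 * κ ^ 3 / 27 + (μ ^ 2 * κ + κ) / 3) β using 1; ring

lemma hBm (β μ κ : ℝ) : HasDerivAt (fun m => funB β m κ) (2 * μ * (β + κ) / 3) μ := by
  have e : (fun m => funB β m κ)
      = fun t => 0 * t ^ 3 + ((β + κ)/3) * t ^ 2 + 0 * t
          + ((2 * β ^ 3 - 3 * β ^ 2 * κ - 3 * β * κ ^ 2 + 2 * κ ^ 3) / 27 + (κ - 2 * β) / 3) := by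
    funext t; unfold funB; ring
  rw [e]
  convert cubic_hasDerivAt 0 ((β + κ)/3) 0
    ((2 * β ^ 3 - 3 * β ^ 2 * κ - 3 * β * κ ^ 2 + 2 * κ ^ 3) / 27 + (κ - 2 * β) / 3) μ using 1
  ring

lemma hBk (β μ κ : ℝ) : HasDerivAt (fun c => funB β μ c)
    ((-3 * β ^ 2 - 6 * β * κ + 6 * κ ^ 2) / 27 + (μ ^ 2 + 1) / 3) κ := by
  have e : (fun c => funB β μ c)
      = fun t => (2/27) * t ^ 3 + (-β/9) * t ^ 2 + (-(β ^ 2)/9 + (μ ^ 2 + 1)/3) * t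
          + (2 * β ^ 3 / 27 + (μ ^ 2 * β - 2 * β) / 3) := by
    funext t; unfold funB; ring
  rw [e]
  convert cubic_hasDerivAt (2/27) (-β/9) (-(β ^ 2)/9 + (μ ^ 2 + 1)/3)
    (2 * β ^ 3 / 27 + (μ ^ 2 * β - 2 * β) / 3) κ using 1; ring

lemma quot_deriv {f g : ℝ → ℝ} {f' g' x : ℝ} (hf : HasDerivAt f f' x)
    (hg : HasDerivAt g g' x) (h : g x ≠ 0) :
    deriv (fun t => f t ^ 3 / g t ^ 2) x
      = (3 * f x ^ 2 * f' * g x - 2 * g' * f x ^ 3) / g x ^ 3 := by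
  rw [show (fun t => f t ^ 3 / g t ^ 2) = f ^ 3 / g ^ 2 from rfl,
    ((hf.pow 3).div (hg.pow 2) (pow_ne_zero 2 h)).deriv]
  simp only [Pi.pow_apply]
  field_simp
  ring

lemma aux_zero (a b a1 a2 a3 b1 b2 b3 c1 c2 c3 : ℝ) (hb : b ≠ 0)
    (h : 3 * b * (c1 * a1 + c2 * a2 + c3 * a3) = 2 * a * (c1 * b1 + c2 * b2 + c3 * b3)) :
    c1 * ((3 * a ^ 2 * a1 * b - 2 * b1 * a ^ 3) / b ^ 3)
      + c2 * ((3 * a ^ 2 * a2 * b - 2 * b2 * a ^ 3) / b ^ 3)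
      + c3 * ((3 * a ^ 2 * a3 * b - 2 * b3 * a ^ 3) / b ^ 3) = 0 := by
  field_simp
  linear_combination a ^ 2 * h

/-- The identities `3·B·V₂A = 2·A·V₂B` and `3·B·V₃A = 2·A·V₃B` hold
everywhere; consequently, wherever `B ≠ 0`, the function `A³/B²` is annihilated by
both vector fields `V₂` and `V₃`. -/
theorem first_integral_A3_over_B2 :
    (∀ β μ κ : ℝ,
      3 * funB β μ κ * V₂ funA β μ κ = 2 * funA β μ κ * V₂ funB β μ κ ∧
      3 * funB β μ κ * V₃ funA β μ κ = 2 * funA β μ κ * V₃ funB β μ κ) ∧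
    (∀ β μ κ : ℝ, funB β μ κ ≠ 0 →
      V₂ (fun b m c => (funA b m c) ^ 3 / (funB b m c) ^ 2) β μ κ = 0 ∧
      V₃ (fun b m c => (funA b m c) ^ 3 / (funB b m c) ^ 2) β μ κ = 0) := by
  constructor
  · intro β μ κ
    unfold V₂ V₃
    rw [(hAb β μ κ).deriv, (hAm β μ κ).deriv, (hAk β μ κ).deriv,
      (hBb β μ κ).deriv, (hBm β μ κ).deriv, (hBk β μ κ).deriv]
    constructor <;> (unfold funA funB; ring)
  · intro β μ κ hB
    unfold V₂ V₃
    rw [quot_deriv (hAb β μ κ) (hBb β μ κ) hB,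
      quot_deriv (hAm β μ κ) (hBm β μ κ) hB,
      quot_deriv (hAk β μ κ) (hBk β μ κ) hB]
    constructor <;>
    · apply aux_zero _ _ _ _ _ _ _ _ _ _ _ hB
      unfold funA funB; ring
end
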